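/- Let D₁ and D₂ be vertex-disjoint double-rays, and let e₁ = (a,b) ∈ E(D₁), e₂ = (c,d) ∈ E(D₂). Then the graph (D₁ ∪ D₂) − {e₁, e₂} + {(a,c), (b,d)} is a disjoint union of exactly two double-rays covering V(D₁) ∪ V(D₂). -/

import Mathlib

/-- Every vertex in the support of `H` has exactly two neighbours. -/
def TwoRegularOn {V : Type*} (H : SimpleGraph V) : Prop :=
  ∀ v ∈ H.support, (H.neighborSet v).ncard = 2

/-- Any two vertices in the support of `H` are joined by a path in `H`. -/
def ConnectedOn {V : Type*} (H : SimpleGraph V) : Prop :=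
  ∀ u ∈ H.support, ∀ v ∈ H.support, H.Reachable u v

/-- A double-ray: an infinite, connected, 2-regular graph (on its support). -/
def IsDoubleRayGraph {V : Type*} (H : SimpleGraph V) : Prop :=
  H.support.Infinite ∧ ConnectedOn H ∧ TwoRegularOn H

namespace DoubleRayAux

open SimpleGraph

variable {V : Type*}

lemma getVert_eq_support_getElem {G : SimpleGraph V} {u v : V} (p : G.Walk u v)
    (i : ℕ) (h : i < p.support.length) :
    p.getVert i = p.support[i] := by
  induction p generalizing i with
  | nil => simp at h; simp [h]
  | cons hadj q ih =>
    cases i with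
    | zero => simp
    | succ n =>
      simp only [SimpleGraph.Walk.support_cons, List.getElem_cons_succ,
        SimpleGraph.Walk.getVert_cons_succ]
      exact ih n (by simpa [SimpleGraph.Walk.length_support] using
        (by simpa [SimpleGraph.Walk.length_support] using h : n + 1 < q.length + 2))

/-- A cycle gives two distinct neighbours of its base point within its support. -/
lemma cycle_two_neighbors {G : SimpleGraph V} {u : V} {q : G.Walk u u} (hq : q.IsCycle) :
    ∃ x y, x ≠ y ∧ G.Adj u x ∧ G.Adj u y ∧ x ∈ q.support ∧ y ∈ q.support := by
  have h3 := hq.three_le_length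
  refine ⟨q.getVert 1, q.getVert (q.length - 1), ?_, ?_, ?_, ?_, ?_⟩
  · have hnil : ¬ q.Nil := hq.not_nil
    have hnodup : q.tail.support.Nodup := by
      rw [SimpleGraph.Walk.support_tail_of_not_nil q hnil]; exact hq.2
    have htlen : q.tail.length + 1 = q.length := SimpleGraph.Walk.length_tail_add_one hnil
    have hslen : q.tail.support.length = q.tail.length + 1 := q.tail.length_support
    have e1 : q.getVert 1 = q.tail.support[0]'(by omega) := by
      have h := getVert_eq_support_getElem q.tail 0 (by omega)
      rw [SimpleGraph.Walk.getVert_tail q] at h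
      simpa using h
    have e2 : q.getVert (q.length - 1) = q.tail.support[q.length - 2]'(by omega) := by
      have h := getVert_eq_support_getElem q.tail (q.length - 2) (by omega)
      rw [SimpleGraph.Walk.getVert_tail q] at h
      rwa [show q.length - 2 + 1 = q.length - 1 by omega] at h
    intro hcontra
    rw [e1, e2] at hcontra
    have := (List.Nodup.getElem_inj_iff hnodup).mp hcontra
    omega
  · have := q.adj_getVert_succ (i := 0) (by omega)
    simpa using this
  · have := q.adj_getVert_succ (i := q.length - 1) (by omega)
    rw [show q.length - 1 + 1 = q.length by omega, q.getVert_length] at this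
    exact this.symm
  · exact SimpleGraph.Walk.mem_support_iff_exists_getVert.mpr ⟨1, rfl, by omega⟩
  · exact SimpleGraph.Walk.mem_support_iff_exists_getVert.mpr ⟨q.length - 1, rfl, by omega⟩

lemma walk_closure {K : SimpleGraph V} {S : Set V}
    (hS : ∀ ⦃x y : V⦄, K.Adj x y → x ∈ S → y ∈ S) :
    ∀ {x y : V}, K.Walk x y → x ∈ S → y ∈ S := by
  intro x y p
  induction p with
  | nil => exact id
  | cons h _ ih => exact fun hx => ih (hS h hx)

lemma reachable_closure {K : SimpleGraph V} {S : Set V}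
    (hS : ∀ ⦃x y : V⦄, K.Adj x y → x ∈ S → y ∈ S) {x y : V}
    (h : K.Reachable x y) (hx : x ∈ S) : y ∈ S := by
  obtain ⟨p⟩ := h
  exact walk_closure hS p hx

lemma cycle_support_closed {H : SimpleGraph V} (hreg : TwoRegularOn H)
    {u : V} {q : H.Walk u u} (hq : q.IsCycle) :
    ∀ ⦃x y : V⦄, H.Adj x y → x ∈ {v | v ∈ q.support} → y ∈ {v | v ∈ q.support} := by
  classical
  intro x y hadj hx
  simp only [Set.mem_setOf_eq] at hx ⊢
  have hq2 := hq.rotate hx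
  obtain ⟨p1, p2, hne, h1, h2, hm1, hm2⟩ := cycle_two_neighbors hq2
  have hrot := SimpleGraph.Walk.support_rotate q x hx
  have hmem : ∀ z, z ∈ (q.rotate x hx).support → z ∈ q.support := by
    intro z hz
    rw [SimpleGraph.Walk.support_eq_cons] at hz
    rcases List.mem_cons.mp hz with rfl | hz
    · exact hx
    · exact List.mem_of_mem_tail (hrot.mem_iff.mp hz)
  have hm1' : p1 ∈ q.support := hmem _ hm1
  have hm2' : p2 ∈ q.support := hmem _ hm2
  have hxsupp : x ∈ H.support := ⟨p1, h1⟩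
  have hcard := hreg x hxsupp
  have hsub : ({p1, p2} : Set V) ⊆ H.neighborSet x := by
    rintro z (rfl | rfl)
    · exact h1
    · exact h2
  have hfin : (H.neighborSet x).Finite := by
    obtain ⟨s, t, hst, hEq⟩ := Set.ncard_eq_two.mp hcard
    rw [hEq]
    exact (Set.finite_singleton t).insert s
  have hEqset : ({p1, p2} : Set V) = H.neighborSet x :=
    Set.eq_of_subset_of_ncard_le hsub (by rw [hcard, Set.ncard_pair hne]) hfin
  have hy : y ∈ ({p1, p2} : Set V) := by rw [hEqset]; exact hadj
  rcases hy with rfl | rfl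
  · exact hm1'
  · exact hm2'

/-- An infinite, connected, 2-regular graph has no cycles. -/
lemma no_cycle {H : SimpleGraph V} (hinf : H.support.Infinite)
    (hconn : ConnectedOn H) (hreg : TwoRegularOn H)
    {u : V} (q : H.Walk u u) : ¬ q.IsCycle := by
  intro hq
  have hclosed := cycle_support_closed hreg hq
  obtain ⟨p1, _, _, h1, _, _, _⟩ := cycle_two_neighbors hq
  have husupp : u ∈ H.support := ⟨p1, h1⟩
  have hu : u ∈ {v | v ∈ q.support} := q.start_mem_support
  have hsub : H.support ⊆ {v | v ∈ q.support} := by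
    intro v hv
    exact reachable_closure hclosed (hconn u husupp v hv) hu
  exact hinf (Set.Finite.subset (q.support.finite_toSet) hsub)

/-- Deleting an edge of an infinite connected 2-regular graph disconnects its endpoints. -/
lemma not_reachable_deleteEdge {H : SimpleGraph V} (hinf : H.support.Infinite)
    (hconn : ConnectedOn H) (hreg : TwoRegularOn H) {a b : V} (hab : H.Adj a b) :
    ¬ (H.deleteEdges {s(a, b)}).Reachable a b := by
  intro hr
  have : H.Adj a b ∧ (H \ fromEdgeSet {s(a, b)}).Reachable a b := ⟨hab, hr⟩
  obtain ⟨w, p, hp, -⟩ := (SimpleGraph.adj_and_reachable_delete_edges_iff_exists_cycle).mp this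
  exact no_cycle hinf hconn hreg p hp

lemma mem_support_of_reachable_ne {K : SimpleGraph V} {x y : V}
    (h : K.Reachable x y) (hne : x ≠ y) : y ∈ K.support := by
  obtain ⟨p⟩ := h.symm
  cases p with
  | nil => exact absurd rfl hne.symm
  | cons hadj q => exact ⟨_, hadj⟩

lemma ncard_two_finite {s : Set V} (h : s.ncard = 2) : s.Finite := by
  obtain ⟨x, y, _, rfl⟩ := Set.ncard_eq_two.mp h
  exact (Set.finite_singleton y).insert x

/-- The component of `a` in `H` minus the edge `ab` is infinite. -/
lemma component_infinite {H : SimpleGraph V} (hinf : H.support.Infinite)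
    (hconn : ConnectedOn H) (hreg : TwoRegularOn H) {a b : V} (hab : H.Adj a b) :
    {v | (H.deleteEdges {s(a, b)}).Reachable a v}.Infinite := by
  classical
  set K := H.deleteEdges {s(a, b)} with hK
  set A := {v | K.Reachable a v} with hA
  have hclosed : ∀ ⦃u w : V⦄, K.Adj u w → u ∈ A → w ∈ A :=
    fun u w h hu => hu.trans h.reachable
  have hnb : b ∉ A := not_reachable_deleteEdge hinf hconn hreg hab
  have hKadj : ∀ u w, K.Adj u w ↔ H.Adj u w ∧ s(u, w) ≠ s(a, b) := by
    intro u w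
    rw [hK, SimpleGraph.deleteEdges_adj]
    simp
  have hNa : K.neighborSet a = H.neighborSet a \ {b} := by
    ext w
    simp only [mem_neighborSet, hKadj, Set.mem_diff, Set.mem_singleton_iff]
    constructor
    · rintro ⟨h1, h2⟩
      refine ⟨h1, fun hw => h2 ?_⟩
      subst hw; rfl
    · rintro ⟨h1, h2⟩
      refine ⟨h1, fun hw => h2 ?_⟩
      rw [Sym2.eq_iff] at hw
      rcases hw with ⟨-, rfl⟩ | ⟨h3, -⟩
      · rfl
      · exact absurd h3 hab.ne
  have haH : a ∈ H.support := ⟨b, hab⟩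
  have hfinNa : (H.neighborSet a).Finite := ncard_two_finite (hreg a haH)
  have hNa_card : (K.neighborSet a).ncard = 1 := by
    rw [hNa, Set.ncard_diff_singleton_of_mem (show b ∈ H.neighborSet a from hab),
      hreg a haH]
  have hNu : ∀ u ∈ A, u ≠ a → (K.neighborSet u).ncard = 2 := by
    intro u hu hua
    have hub : u ≠ b := fun h => hnb (h ▸ hu)
    have hNeq : K.neighborSet u = H.neighborSet u := by
      ext w
      simp only [mem_neighborSet, hKadj]
      refine ⟨fun h => h.1, fun h => ⟨h, fun hw => ?_⟩⟩
      rw [Sym2.eq_iff] at hw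
      rcases hw with ⟨rfl, -⟩ | ⟨rfl, -⟩
      · exact hua rfl
      · exact hub rfl
    have huK : u ∈ K.support := mem_support_of_reachable_ne hu hua.symm
    have huH : u ∈ H.support := SimpleGraph.support_mono (SimpleGraph.deleteEdges_le _) huK
    rw [hNeq]; exact hreg u huH
  by_contra hAfin
  rw [Set.not_infinite] at hAfin
  haveI : Fintype ↥A := hAfin.fintype
  let GA : SimpleGraph ↥A := SimpleGraph.induce A K
  haveI : DecidableRel GA.Adj := Classical.decRel _
  have haA : a ∈ A := Reachable.refl a
  have hnbA : ∀ (v : ↥A) (w : V), K.Adj ↑v w → w ∈ A := fun v w h => hclosed h v.2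
  have hdeg : ∀ v : ↥A, GA.degree v = (K.neighborSet ↑v).ncard := by
    intro v
    have e : ↥(GA.neighborSet v) ≃ ↥(K.neighborSet ↑v) :=
      { toFun := fun x => ⟨↑(x.1), x.2⟩
        invFun := fun w => ⟨⟨↑w, hnbA v w w.2⟩, w.2⟩
        left_inv := fun x => by ext; rfl
        right_inv := fun w => rfl }
    rw [← SimpleGraph.card_neighborSet_eq_degree]
    rw [← Nat.card_coe_set_eq, Nat.card_congr e.symm, Nat.card_eq_fintype_card]
  have hdeg_a : ∀ v : ↥A, (v : V) = a → GA.degree v = 1 := by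
    intro v hv
    rw [hdeg, hv, hNa_card]
  have hdeg_ne : ∀ v : ↥A, (v : V) ≠ a → GA.degree v = 2 := by
    intro v hv
    rw [hdeg]; exact hNu ↑v v.2 hv
  obtain ⟨k, hk⟩ := GA.even_card_odd_degree_vertices
  have hfilter : (Finset.univ.filter fun v : ↥A => Odd (GA.degree v)) = {⟨a, haA⟩} := by
    ext v
    simp only [Finset.mem_filter, Finset.mem_univ, true_and, Finset.mem_singleton]
    constructor
    · intro hodd
      by_contra hne
      have : (v : V) ≠ a := fun h => hne (Subtype.ext h)
      rw [hdeg_ne v this] at hodd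
      exact (Nat.not_odd_iff_even.mpr (by norm_num)) hodd
    · rintro rfl
      rw [hdeg_a _ rfl]
      exact odd_one
  rw [hfilter] at hk
  simp at hk
  omega

/-- The reachable-or lemma: every support vertex of `D` is reachable from `a` or `b`
in `D` minus the edge `ab`. -/
lemma reach_or {D : SimpleGraph V} (hconn : ConnectedOn D) {a b : V} (hab : D.Adj a b) :
    ∀ v ∈ D.support,
      (D.deleteEdges {s(a, b)}).Reachable a v ∨ (D.deleteEdges {s(a, b)}).Reachable b v := by
  classical
  set K := D.deleteEdges {s(a, b)} with hK
  set S := {v | K.Reachable a v ∨ K.Reachable b v} with hS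
  have hclosed : ∀ ⦃x y : V⦄, D.Adj x y → x ∈ S → y ∈ S := by
    intro x y hadj hx
    by_cases he : s(x, y) = s(a, b)
    · rw [Sym2.eq_iff] at he
      rcases he with ⟨-, rfl⟩ | ⟨-, rfl⟩
      · exact Or.inr (Reachable.refl _)
      · exact Or.inl (Reachable.refl _)
    · have hKxy : K.Adj x y := by
        rw [hK, SimpleGraph.deleteEdges_adj]
        exact ⟨hadj, by simpa using he⟩
      rcases hx with h | h
      · exact Or.inl (h.trans hKxy.reachable)
      · exact Or.inr (h.trans hKxy.reachable)
  intro v hv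
  have haD : a ∈ D.support := ⟨b, hab⟩
  have haS : a ∈ S := Or.inl (Reachable.refl a)
  obtain ⟨p⟩ := hconn a haD v hv
  exact walk_closure hclosed p haS

/-- The component graph of `a` in `G`. -/
def comp (G : SimpleGraph V) (a : V) : SimpleGraph V where
  Adj x y := G.Adj x y ∧ G.Reachable a x
  symm := ⟨fun x y h => ⟨h.1.symm, h.2.trans h.1.reachable⟩⟩
  loopless := ⟨fun x h => G.loopless.irrefl x h.1⟩

lemma comp_le (G : SimpleGraph V) (a : V) : comp G a ≤ G := fun _ _ h => h.1

lemma comp_adj {G : SimpleGraph V} {a x y : V} :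
    (comp G a).Adj x y ↔ G.Adj x y ∧ G.Reachable a x := Iff.rfl

lemma mem_comp_support {G : SimpleGraph V} {a v : V} :
    v ∈ (comp G a).support ↔ v ∈ G.support ∧ G.Reachable a v := by
  constructor
  · rintro ⟨w, hw, hr⟩
    exact ⟨⟨w, hw⟩, hr⟩
  · rintro ⟨⟨w, hw⟩, hr⟩
    exact ⟨w, hw, hr⟩

lemma comp_neighborSet {G : SimpleGraph V} {a v : V} (h : G.Reachable a v) :
    (comp G a).neighborSet v = G.neighborSet v := by
  ext w
  simp only [mem_neighborSet, comp_adj]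
  exact ⟨fun h' => h'.1, fun h' => ⟨h', h⟩⟩

lemma comp_walk {G : SimpleGraph V} {a : V} :
    ∀ {x y : V}, G.Walk x y → G.Reachable a x → (comp G a).Reachable x y := by
  intro x y p
  induction p with
  | nil => exact fun _ => Reachable.refl _
  | cons h q ih =>
    intro hr
    exact (Adj.reachable (show (comp G a).Adj _ _ from ⟨h, hr⟩)).trans
      (ih (hr.trans h.reachable))

lemma comp_connectedOn (G : SimpleGraph V) (a : V) : ConnectedOn (comp G a) := by
  intro u hu v hv
  rw [mem_comp_support] at hu hv
  obtain ⟨pu⟩ := hu.2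
  obtain ⟨pv⟩ := hv.2
  have h1 : (comp G a).Reachable a u := comp_walk pu (Reachable.refl a)
  have h2 : (comp G a).Reachable a v := comp_walk pv (Reachable.refl a)
  exact h1.symm.trans h2

lemma comp_twoRegularOn {G : SimpleGraph V} (hreg : TwoRegularOn G) (a : V) :
    TwoRegularOn (comp G a) := by
  intro v hv
  rw [mem_comp_support] at hv
  rw [comp_neighborSet hv.2]
  exact hreg v hv.1

end DoubleRayAux

open SimpleGraph DoubleRayAux in
theorem stmt_11 {V : Type*} (D₁ D₂ : SimpleGraph V)
    (hdisj : Disjoint D₁.support D₂.support)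
    (hD₁ : IsDoubleRayGraph D₁) (hD₂ : IsDoubleRayGraph D₂)
    (a b c d : V) (he₁ : D₁.Adj a b) (he₂ : D₂.Adj c d) :
    ∀ G' : SimpleGraph V,
      G' = ((D₁ ⊔ D₂).deleteEdges {s(a, b), s(c, d)}) ⊔
            SimpleGraph.fromEdgeSet {s(a, c), s(b, d)} →
      ∃ E₁ E₂ : SimpleGraph V,
        E₁ ⊔ E₂ = G' ∧
        Disjoint E₁.support E₂.support ∧
        IsDoubleRayGraph E₁ ∧ IsDoubleRayGraph E₂ ∧
        E₁.support ∪ E₂.support = D₁.support ∪ D₂.support := by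
  obtain ⟨hinf₁, hconn₁, hreg₁⟩ := hD₁
  obtain ⟨hinf₂, hconn₂, hreg₂⟩ := hD₂
  intro G' hG'def
  classical
  set K₁ := D₁.deleteEdges {s(a, b)} with hK₁
  set K₂ := D₂.deleteEdges {s(c, d)} with hK₂
  -- basic membership facts
  have haD1 : a ∈ D₁.support := ⟨b, he₁⟩
  have hbD1 : b ∈ D₁.support := ⟨a, he₁.symm⟩
  have hcD2 : c ∈ D₂.support := ⟨d, he₂⟩
  have hdD2 : d ∈ D₂.support := ⟨c, he₂.symm⟩
  have hnotD2 : ∀ v ∈ D₁.support, v ∉ D₂.support := fun v hv => Set.disjoint_left.mp hdisj hv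
  have hnotD1 : ∀ v ∈ D₂.support, v ∉ D₁.support :=
    fun v hv => Set.disjoint_right.mp hdisj hv
  have hac : a ≠ c := fun h => hnotD2 a haD1 (h ▸ hcD2)
  have had : a ≠ d := fun h => hnotD2 a haD1 (h ▸ hdD2)
  have hbc : b ≠ c := fun h => hnotD2 b hbD1 (h ▸ hcD2)
  have hbd : b ≠ d := fun h => hnotD2 b hbD1 (h ▸ hdD2)
  -- adjacency characterisation of G'
  have hG'adj : ∀ x y, G'.Adj x y ↔
      ((D₁.Adj x y ∨ D₂.Adj x y) ∧ s(x, y) ≠ s(a, b) ∧ s(x, y) ≠ s(c, d)) ∨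
      ((s(x, y) = s(a, c) ∨ s(x, y) = s(b, d)) ∧ x ≠ y) := by
    subst hG'def
    intro x y
    simp only [SimpleGraph.sup_adj, SimpleGraph.deleteEdges_adj,
      SimpleGraph.fromEdgeSet_adj, Set.mem_insert_iff, Set.mem_singleton_iff]
    tauto
  have hK1le : K₁ ≤ G' := by
    intro x y h
    rw [hK₁, SimpleGraph.deleteEdges_adj] at h
    obtain ⟨h1, h2⟩ := h
    rw [hG'adj]
    refine Or.inl ⟨Or.inl h1, by simpa using h2, fun hcd => ?_⟩
    rw [Sym2.eq_iff] at hcd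
    have hx1 : x ∈ D₁.support := ⟨y, h1⟩
    rcases hcd with ⟨rfl, -⟩ | ⟨rfl, -⟩
    · exact hnotD2 _ hx1 hcD2
    · exact hnotD2 _ hx1 hdD2
  have hK2le : K₂ ≤ G' := by
    intro x y h
    rw [hK₂, SimpleGraph.deleteEdges_adj] at h
    obtain ⟨h1, h2⟩ := h
    rw [hG'adj]
    refine Or.inl ⟨Or.inr h1, fun hab => ?_, by simpa using h2⟩
    rw [Sym2.eq_iff] at hab
    have hx2 : x ∈ D₂.support := ⟨y, h1⟩
    rcases hab with ⟨rfl, -⟩ | ⟨rfl, -⟩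
    · exact hnotD1 _ hx2 haD1
    · exact hnotD1 _ hx2 hbD1
  have hG'ac : G'.Adj a c := (hG'adj a c).mpr (Or.inr ⟨Or.inl rfl, hac⟩)
  have hG'bd : G'.Adj b d := (hG'adj b d).mpr (Or.inr ⟨Or.inr rfl, hbd⟩)
  -- neighbourhood computations
  have hNgen1 : ∀ v, v ∈ D₁.support → v ≠ a → v ≠ b →
      G'.neighborSet v = D₁.neighborSet v := by
    intro v hv hva hvb
    ext w
    simp only [SimpleGraph.mem_neighborSet, hG'adj]
    constructor
    · rintro (⟨h1 | h1, h2, h3⟩ | ⟨h1 | h1, hne⟩)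
      · exact h1
      · exact absurd (⟨w, h1⟩ : v ∈ D₂.support) (hnotD2 v hv)
      · rw [Sym2.eq_iff] at h1
        rcases h1 with ⟨h, -⟩ | ⟨h, -⟩
        · exact absurd h hva
        · exact absurd (h ▸ hcD2 : v ∈ D₂.support) (hnotD2 v hv)
      · rw [Sym2.eq_iff] at h1
        rcases h1 with ⟨h, -⟩ | ⟨h, -⟩
        · exact absurd h hvb
        · exact absurd (h ▸ hdD2 : v ∈ D₂.support) (hnotD2 v hv)
    · intro h
      refine Or.inl ⟨Or.inl h, fun hab => ?_, fun hcd => ?_⟩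
      · rw [Sym2.eq_iff] at hab
        rcases hab with ⟨h', -⟩ | ⟨h', -⟩
        · exact hva h'
        · exact hvb h'
      · rw [Sym2.eq_iff] at hcd
        rcases hcd with ⟨h', -⟩ | ⟨h', -⟩
        · exact hnotD2 v hv (h' ▸ hcD2)
        · exact hnotD2 v hv (h' ▸ hdD2)
  have hNgen2 : ∀ v, v ∈ D₂.support → v ≠ c → v ≠ d →
      G'.neighborSet v = D₂.neighborSet v := by
    intro v hv hvc hvd
    ext w
    simp only [SimpleGraph.mem_neighborSet, hG'adj]
    constructor
    · rintro (⟨h1 | h1, h2, h3⟩ | ⟨h1 | h1, hne⟩)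
      · exact absurd (⟨w, h1⟩ : v ∈ D₁.support) (hnotD1 v hv)
      · exact h1
      · rw [Sym2.eq_iff] at h1
        rcases h1 with ⟨h, -⟩ | ⟨h, -⟩
        · exact absurd (h ▸ haD1 : v ∈ D₁.support) (hnotD1 v hv)
        · exact absurd h hvc
      · rw [Sym2.eq_iff] at h1
        rcases h1 with ⟨h, -⟩ | ⟨h, -⟩
        · exact absurd (h ▸ hbD1 : v ∈ D₁.support) (hnotD1 v hv)
        · exact absurd h hvd
    · intro h
      refine Or.inl ⟨Or.inr h, fun hab => ?_, fun hcd => ?_⟩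
      · rw [Sym2.eq_iff] at hab
        rcases hab with ⟨h', -⟩ | ⟨h', -⟩
        · exact hnotD1 v hv (h' ▸ haD1)
        · exact hnotD1 v hv (h' ▸ hbD1)
      · rw [Sym2.eq_iff] at hcd
        rcases hcd with ⟨h', -⟩ | ⟨h', -⟩
        · exact hvc h'
        · exact hvd h'
  have hNa : G'.neighborSet a = insert c (D₁.neighborSet a \ {b}) := by
    ext w
    simp only [SimpleGraph.mem_neighborSet, hG'adj, Set.mem_insert_iff, Set.mem_diff,
      Set.mem_singleton_iff]
    constructor
    · rintro (⟨h1 | h1, h2, h3⟩ | ⟨h1 | h1, hne⟩)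
      · refine Or.inr ⟨h1, fun hw => h2 (by rw [hw])⟩
      · exact absurd (⟨w, h1⟩ : a ∈ D₂.support) (hnotD2 a haD1)
      · rw [Sym2.eq_iff] at h1
        rcases h1 with ⟨-, rfl⟩ | ⟨h, -⟩
        · exact Or.inl rfl
        · exact absurd h hac
      · rw [Sym2.eq_iff] at h1
        rcases h1 with ⟨h, -⟩ | ⟨h, -⟩
        · exact absurd h he₁.ne
        · exact absurd h had
    · rintro (rfl | ⟨h1, h2⟩)
      · exact Or.inr ⟨Or.inl rfl, hac⟩
      · refine Or.inl ⟨Or.inl h1, fun hab => ?_, fun hcd => ?_⟩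
        · exact h2 (Sym2.congr_right.mp hab)
        · rw [Sym2.eq_iff] at hcd
          rcases hcd with ⟨h', -⟩ | ⟨h', -⟩
          · exact hnotD2 a haD1 (h' ▸ hcD2)
          · exact hnotD2 a haD1 (h' ▸ hdD2)
  have hNb : G'.neighborSet b = insert d (D₁.neighborSet b \ {a}) := by
    ext w
    simp only [SimpleGraph.mem_neighborSet, hG'adj, Set.mem_insert_iff, Set.mem_diff,
      Set.mem_singleton_iff]
    constructor
    · rintro (⟨h1 | h1, h2, h3⟩ | ⟨h1 | h1, hne⟩)
      · refine Or.inr ⟨h1, fun hw => h2 (by rw [hw, Sym2.eq_swap])⟩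
      · exact absurd (⟨w, h1⟩ : b ∈ D₂.support) (hnotD2 b hbD1)
      · rw [Sym2.eq_iff] at h1
        rcases h1 with ⟨h, -⟩ | ⟨h, -⟩
        · exact absurd h he₁.ne.symm
        · exact absurd h hbc
      · rw [Sym2.eq_iff] at h1
        rcases h1 with ⟨-, rfl⟩ | ⟨h, -⟩
        · exact Or.inl rfl
        · exact absurd h hbd
    · rintro (rfl | ⟨h1, h2⟩)
      · exact Or.inr ⟨Or.inr rfl, hbd⟩
      · refine Or.inl ⟨Or.inl h1, fun hab => ?_, fun hcd => ?_⟩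
        · rw [Sym2.eq_iff] at hab
          rcases hab with ⟨h', -⟩ | ⟨-, h'⟩
          · exact he₁.ne.symm h'
          · exact h2 h'
        · rw [Sym2.eq_iff] at hcd
          rcases hcd with ⟨h', -⟩ | ⟨h', -⟩
          · exact hnotD2 b hbD1 (h' ▸ hcD2)
          · exact hnotD2 b hbD1 (h' ▸ hdD2)
  have hNc : G'.neighborSet c = insert a (D₂.neighborSet c \ {d}) := by
    ext w
    simp only [SimpleGraph.mem_neighborSet, hG'adj, Set.mem_insert_iff, Set.mem_diff,
      Set.mem_singleton_iff]
    constructor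
    · rintro (⟨h1 | h1, h2, h3⟩ | ⟨h1 | h1, hne⟩)
      · exact absurd (⟨w, h1⟩ : c ∈ D₁.support) (hnotD1 c hcD2)
      · refine Or.inr ⟨h1, fun hw => h3 (by rw [hw])⟩
      · rw [Sym2.eq_iff] at h1
        rcases h1 with ⟨h, -⟩ | ⟨-, rfl⟩
        · exact absurd h hac.symm
        · exact Or.inl rfl
      · rw [Sym2.eq_iff] at h1
        rcases h1 with ⟨h, -⟩ | ⟨h, -⟩
        · exact absurd h hbc.symm
        · exact absurd h he₂.ne
    · rintro (rfl | ⟨h1, h2⟩)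
      · exact Or.inr ⟨Or.inl (Sym2.eq_swap), hac.symm⟩
      · refine Or.inl ⟨Or.inr h1, fun hab => ?_, fun hcd => ?_⟩
        · rw [Sym2.eq_iff] at hab
          rcases hab with ⟨h', -⟩ | ⟨h', -⟩
          · exact hnotD1 c hcD2 (h' ▸ haD1)
          · exact hnotD1 c hcD2 (h' ▸ hbD1)
        · exact h2 (Sym2.congr_right.mp hcd)
  have hNd : G'.neighborSet d = insert b (D₂.neighborSet d \ {c}) := by
    ext w
    simp only [SimpleGraph.mem_neighborSet, hG'adj, Set.mem_insert_iff, Set.mem_diff,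
      Set.mem_singleton_iff]
    constructor
    · rintro (⟨h1 | h1, h2, h3⟩ | ⟨h1 | h1, hne⟩)
      · exact absurd (⟨w, h1⟩ : d ∈ D₁.support) (hnotD1 d hdD2)
      · refine Or.inr ⟨h1, fun hw => h3 (by rw [hw, Sym2.eq_swap])⟩
      · rw [Sym2.eq_iff] at h1
        rcases h1 with ⟨h, -⟩ | ⟨h, -⟩
        · exact absurd h had.symm
        · exact absurd h he₂.ne.symm
      · rw [Sym2.eq_iff] at h1
        rcases h1 with ⟨h, -⟩ | ⟨-, rfl⟩
        · exact absurd h hbd.symm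
        · exact Or.inl rfl
    · rintro (rfl | ⟨h1, h2⟩)
      · exact Or.inr ⟨Or.inr (Sym2.eq_swap), hbd.symm⟩
      · refine Or.inl ⟨Or.inr h1, fun hab => ?_, fun hcd => ?_⟩
        · rw [Sym2.eq_iff] at hab
          rcases hab with ⟨h', -⟩ | ⟨h', -⟩
          · exact hnotD1 d hdD2 (h' ▸ haD1)
          · exact hnotD1 d hdD2 (h' ▸ hbD1)
        · rw [Sym2.eq_iff] at hcd
          rcases hcd with ⟨h', -⟩ | ⟨-, h'⟩
          · exact he₂.ne.symm h'
          · exact h2 h'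
  -- cardinalities
  have hcard_insert : ∀ (D : SimpleGraph V) (x y z : V), D.Adj x y →
      (D.neighborSet x).ncard = 2 → z ∉ D.support →
      (insert z (D.neighborSet x \ {y})).ncard = 2 := by
    intro D x y z hxy hcard hz
    have hfin : (D.neighborSet x).Finite := ncard_two_finite hcard
    have hznot : z ∉ D.neighborSet x \ {y} := by
      intro hmem
      exact hz ⟨x, (hmem.1 : D.Adj x z).symm⟩
    rw [Set.ncard_insert_of_notMem hznot hfin.diff,
      Set.ncard_diff_singleton_of_mem (show y ∈ D.neighborSet x from hxy), hcard]
  -- support of G'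
  have hsupG' : G'.support ⊆ D₁.support ∪ D₂.support := by
    rintro v ⟨w, hw⟩
    change G'.Adj v w at hw
    rw [hG'adj] at hw
    rcases hw with ⟨h1 | h1, -, -⟩ | ⟨h1 | h1, -⟩
    · exact Or.inl ⟨w, h1⟩
    · exact Or.inr ⟨w, h1⟩
    · rw [Sym2.eq_iff] at h1
      rcases h1 with ⟨rfl, -⟩ | ⟨rfl, -⟩
      · exact Or.inl haD1
      · exact Or.inr hcD2
    · rw [Sym2.eq_iff] at h1
      rcases h1 with ⟨rfl, -⟩ | ⟨rfl, -⟩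
      · exact Or.inl hbD1
      · exact Or.inr hdD2
  -- G' is 2-regular on its support
  have hregG' : TwoRegularOn G' := by
    intro v hv
    rcases hsupG' hv with hv1 | hv2
    · by_cases hva : v = a
      · subst hva
        rw [hNa]
        exact hcard_insert D₁ v b c he₁ (hreg₁ v hv1) (hnotD1 c hcD2)
      · by_cases hvb : v = b
        · subst hvb
          rw [hNb]
          exact hcard_insert D₁ v a d he₁.symm (hreg₁ v hv1) (hnotD1 d hdD2)
        · rw [hNgen1 v hv1 hva hvb]
          exact hreg₁ v hv1
    · by_cases hvc : v = c
      · subst hvc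
        rw [hNc]
        exact hcard_insert D₂ v d a he₂ (hreg₂ v hv2) (hnotD2 a haD1)
      · by_cases hvd : v = d
        · subst hvd
          rw [hNd]
          exact hcard_insert D₂ v c b he₂.symm (hreg₂ v hv2) (hnotD2 b hbD1)
        · rw [hNgen2 v hv2 hvc hvd]
          exact hreg₂ v hv2
  -- D₁.support and D₂.support are contained in G'.support
  have hsupD1G' : D₁.support ⊆ G'.support := by
    intro v hv
    by_cases hva : v = a
    · exact hva ▸ ⟨c, hG'ac⟩
    · by_cases hvb : v = b
      · exact hvb ▸ ⟨d, hG'bd⟩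
      · obtain ⟨w, hw⟩ := id hv
        refine ⟨w, ?_⟩
        have := hNgen1 v hv hva hvb
        change G'.Adj v w
        rw [← SimpleGraph.mem_neighborSet, this]
        exact hw
  have hsupD2G' : D₂.support ⊆ G'.support := by
    intro v hv
    by_cases hvc : v = c
    · exact hvc ▸ ⟨a, hG'ac.symm⟩
    · by_cases hvd : v = d
      · exact hvd ▸ ⟨b, hG'bd.symm⟩
      · obtain ⟨w, hw⟩ := id hv
        refine ⟨w, ?_⟩
        have := hNgen2 v hv hvc hvd
        change G'.Adj v w
        rw [← SimpleGraph.mem_neighborSet, this]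
        exact hw
  -- every support vertex of G' is reachable from a or b
  have hreachab : ∀ v ∈ G'.support, G'.Reachable a v ∨ G'.Reachable b v := by
    intro v hv
    rcases hsupG' hv with hv1 | hv2
    · rcases reach_or hconn₁ he₁ v hv1 with h | h
      · exact Or.inl (h.mono hK1le)
      · exact Or.inr (h.mono hK1le)
    · rcases reach_or hconn₂ he₂ v hv2 with h | h
      · exact Or.inl (hG'ac.reachable.trans (h.mono hK2le))
      · exact Or.inr (hG'bd.reachable.trans (h.mono hK2le))
  -- a and b are not connected in G'
  have hK1reach : ∀ {x : V}, K₁.Reachable a x → x = a ∨ x ∈ D₁.support := by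
    intro x h
    rcases em (x = a) with hx | hx
    · exact Or.inl hx
    · exact Or.inr (SimpleGraph.support_mono (SimpleGraph.deleteEdges_le _)
        (mem_support_of_reachable_ne h (fun h' => hx h'.symm)))
  have hK2reach : ∀ {x : V}, K₂.Reachable c x → x = c ∨ x ∈ D₂.support := by
    intro x h
    rcases em (x = c) with hx | hx
    · exact Or.inl hx
    · exact Or.inr (SimpleGraph.support_mono (SimpleGraph.deleteEdges_le _)
        (mem_support_of_reachable_ne h (fun h' => hx h'.symm)))
  have hnab₁ : ¬ K₁.Reachable a b := not_reachable_deleteEdge hinf₁ hconn₁ hreg₁ he₁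
  have hncd₂ : ¬ K₂.Reachable c d := not_reachable_deleteEdge hinf₂ hconn₂ hreg₂ he₂
  have hnotreachab : ¬ G'.Reachable a b := by
    set S := {v | K₁.Reachable a v ∨ K₂.Reachable c v} with hS
    have hbS : b ∉ S := by
      rintro (h | h)
      · exact hnab₁ h
      · rcases hK2reach h with h' | h'
        · exact hbc h'
        · exact hnotD2 b hbD1 h'
    have hclosedS : ∀ ⦃x y : V⦄, G'.Adj x y → x ∈ S → y ∈ S := by
      intro x y hxy hx
      rw [hG'adj] at hxy
      rcases hxy with ⟨h1 | h1, h2, h3⟩ | ⟨h1 | h1, hne⟩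
      · have hKxy : K₁.Adj x y := by
          rw [hK₁, SimpleGraph.deleteEdges_adj]
          exact ⟨h1, by simpa using h2⟩
        rcases hx with h | h
        · exact Or.inl (h.trans hKxy.reachable)
        · rcases hK2reach h with h' | h'
          · exact absurd (h' ▸ hcD2 : x ∈ D₂.support) (hnotD2 x ⟨y, h1⟩)
          · exact absurd h' (hnotD2 x ⟨y, h1⟩)
      · have hKxy : K₂.Adj x y := by
          rw [hK₂, SimpleGraph.deleteEdges_adj]
          exact ⟨h1, by simpa using h3⟩
        rcases hx with h | h
        · rcases hK1reach h with h' | h'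
          · exact absurd (h' ▸ haD1 : x ∈ D₁.support) (hnotD1 x ⟨y, h1⟩)
          · exact absurd h' (hnotD1 x ⟨y, h1⟩)
        · exact Or.inr (h.trans hKxy.reachable)
      · rw [Sym2.eq_iff] at h1
        rcases h1 with ⟨-, rfl⟩ | ⟨-, rfl⟩
        · exact Or.inr (SimpleGraph.Reachable.refl _)
        · exact Or.inl (SimpleGraph.Reachable.refl _)
      · rw [Sym2.eq_iff] at h1
        rcases h1 with ⟨rfl, rfl⟩ | ⟨rfl, rfl⟩
        · exact absurd hx hbS
        · rcases hx with h | h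
          · rcases hK1reach h with h' | h'
            · exact absurd h' had.symm
            · exact absurd h' (hnotD1 x hdD2)
          · exact absurd h hncd₂
    intro hr
    have haS : a ∈ S := Or.inl (SimpleGraph.Reachable.refl a)
    exact hbS (reachable_closure hclosedS hr haS)
  -- the two new double rays
  refine ⟨comp G' a, comp G' b, ?_, ?_, ?_, ?_, ?_⟩
  · ext x y
    simp only [SimpleGraph.sup_adj, comp_adj]
    constructor
    · rintro (⟨h, -⟩ | ⟨h, -⟩) <;> exact h
    · intro h
      rcases hreachab x ⟨y, h⟩ with hr | hr
      · exact Or.inl ⟨h, hr⟩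
      · exact Or.inr ⟨h, hr⟩
  · rw [Set.disjoint_left]
    intro v h1 h2
    rw [mem_comp_support] at h1 h2
    exact hnotreachab (h1.2.trans h2.2.symm)
  · refine ⟨?_, comp_connectedOn G' a, comp_twoRegularOn hregG' a⟩
    have hinfA : {v | K₁.Reachable a v}.Infinite :=
      component_infinite hinf₁ hconn₁ hreg₁ he₁
    refine hinfA.mono ?_
    intro v hv
    rw [mem_comp_support]
    refine ⟨?_, (hv : K₁.Reachable a v).mono hK1le⟩
    rcases hK1reach hv with rfl | h
    · exact ⟨c, hG'ac⟩
    · exact hsupD1G' h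
  · refine ⟨?_, comp_connectedOn G' b, comp_twoRegularOn hregG' b⟩
    have hinfB : {v | (D₁.deleteEdges {s(b, a)}).Reachable b v}.Infinite :=
      component_infinite hinf₁ hconn₁ hreg₁ he₁.symm
    simp only [Sym2.eq_swap] at hinfB
    have hK1reachb : ∀ {x : V}, K₁.Reachable b x → x = b ∨ x ∈ D₁.support := by
      intro x h
      rcases em (x = b) with hx | hx
      · exact Or.inl hx
      · exact Or.inr (SimpleGraph.support_mono (SimpleGraph.deleteEdges_le _)
          (mem_support_of_reachable_ne h (fun h' => hx h'.symm)))
    refine hinfB.mono ?_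
    intro v hv
    rw [mem_comp_support]
    refine ⟨?_, (hv : K₁.Reachable b v).mono hK1le⟩
    rcases hK1reachb hv with rfl | h
    · exact ⟨d, hG'bd⟩
    · exact hsupD1G' h
  · ext v
    simp only [Set.mem_union]
    constructor
    · rintro (h | h) <;> rw [mem_comp_support] at h <;> exact hsupG' h.1
    · intro hv
      have hvG' : v ∈ G'.support := by
        rcases hv with h | h
        · exact hsupD1G' h
        · exact hsupD2G' h
      rcases hreachab v hvG' with hr | hr
      · exact Or.inl (mem_comp_support.mpr ⟨hvG', hr⟩)
      · exact Or.inr (mem_comp_support.mpr ⟨hvG', hr⟩)
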